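/- Let $L$ be a vertical line and $S$ a finite set of non-vertical lines, partitioned into layers $L_1(S), L_2(S), \ldots$ where $L_i(S)$ consists of the lines on the upper envelope of $S \setminus \bigcup_{j<i} L_j(S)$. Let $l^1$ be the line of $S$ with the highest intersection with $L$, so $l^1 = l_1(L)$, the line of $L_1(S)$ achieving the upper envelope of $L_1(S)$ at $L$. Then the line $l^2$ of $S \setminus \{l^1\}$ with the highest intersection with $L$ belongs to the set $H$ consisting of: $l_2(L)$ (the line of $L_2(S)$ achieving the upper envelope of $L_2(S)$ at $L$), the left neighbor of $l_1(L)$ in $L_1(S)$, and the right neighbor of $l_1(L)$ in $L_1(S)$ (where neighbors refer to the ordering of lines along the upper envelope of $L_1(S)$). -/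

import Mathlib

/-- If `p` is strictly above every other line of `S` at `x0`, then `p` is (weakly)
above every line of `S` on an open interval around `x0`. -/
lemma exists_interval_dom (S : Finset (ℝ × ℝ)) (x0 : ℝ)
    (val : ℝ × ℝ → ℝ → ℝ) (hval : ∀ p x, val p x = p.1 * x + p.2)
    (p : ℝ × ℝ)
    (hp : ∀ q ∈ S, q ≠ p → val q x0 < val p x0) :
    ∃ x y : ℝ, x < y ∧ ∀ z ∈ Set.Ioo x y, ∀ q ∈ S, val q z ≤ val p z := by
  have hcont : ∀ q : ℝ × ℝ, Continuous (fun z => val q z) := by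
    intro q
    have : (fun z => val q z) = fun z => q.1 * z + q.2 := by
      funext z; exact hval q z
    rw [this]; continuity
  set U : Set ℝ := ⋂ q ∈ ((S : Set (ℝ × ℝ)) \ {p}), {z | val q z < val p z} with hU
  have hopen : IsOpen U := by
    apply Set.Finite.isOpen_biInter ((S.finite_toSet).diff)
    intro q _
    exact isOpen_lt (hcont q) (hcont p)
  have hx0 : x0 ∈ U := by
    rw [hU]
    refine Set.mem_iInter₂.2 ?_
    intro q hq
    exact hp q hq.1 (by simpa using hq.2)
  obtain ⟨ε, hε, hball⟩ := Metric.isOpen_iff.1 hopen x0 hx0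
  refine ⟨x0 - ε, x0 + ε, by linarith, ?_⟩
  intro z hz q hq
  by_cases hqp : q = p
  · subst hqp; exact le_refl _
  · have hzU : z ∈ U := hball (by rw [Real.ball_eq_Ioo]; exact hz)
    have := Set.mem_iInter₂.1 hzU q ⟨hq, by simpa using hqp⟩
    exact le_of_lt this

/-- Lemma 4 (lem:40): the line `lsec` of `S \ {l1}` with the highest intersection with the
vertical line at `x0` is either the line of the second layer `L2` achieving its upper
envelope at `x0`, or a (left or right) neighbor of `l1` in the first layer `L1` (lines of
a layer being ordered by slope). Lines are pairs `(slope, intercept)`. -/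
theorem stmt9 (S : Finset (ℝ × ℝ)) (x0 : ℝ)
    (val : ℝ × ℝ → ℝ → ℝ) (hval : ∀ p x, val p x = p.1 * x + p.2)
    (hdist : ∀ p ∈ S, ∀ q ∈ S, val p x0 = val q x0 → p = q)
    (L1 : Finset (ℝ × ℝ))
    (hL1 : ∀ p, p ∈ L1 ↔ p ∈ S ∧ ∃ x y : ℝ, x < y ∧
      ∀ z ∈ Set.Ioo x y, ∀ q ∈ S, val q z ≤ val p z)
    (L2 : Finset (ℝ × ℝ))
    (hL2 : ∀ p, p ∈ L2 ↔ p ∈ S \ L1 ∧ ∃ x y : ℝ, x < y ∧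
      ∀ z ∈ Set.Ioo x y, ∀ q ∈ S \ L1, val q z ≤ val p z)
    (l1 : ℝ × ℝ) (hl1 : l1 ∈ S) (hl1max : ∀ q ∈ S, val q x0 ≤ val l1 x0)
    (l2 : ℝ × ℝ) (hl2 : l2 ∈ L2) (hl2max : ∀ q ∈ L2, val q x0 ≤ val l2 x0)
    (lsec : ℝ × ℝ) (hlsec : lsec ∈ S) (hlsecne : lsec ≠ l1)
    (hlsecmax : ∀ q ∈ S, q ≠ l1 → val q x0 ≤ val lsec x0) :
    lsec = l2 ∨ (lsec ∈ L1 ∧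
      ∀ q ∈ L1, ¬(min lsec.1 l1.1 < q.1 ∧ q.1 < max lsec.1 l1.1)) := by
  -- l1 belongs to L1
  have hl1L1 : l1 ∈ L1 := by
    refine (hL1 l1).2 ⟨hl1, ?_⟩
    apply exists_interval_dom S x0 val hval l1
    intro q hq hne
    exact lt_of_le_of_ne (hl1max q hq) (fun h => hne (hdist q hq l1 hl1 h))
  by_cases hmem : lsec ∈ L1
  · -- lsec ∈ L1 : show no line of L1 has slope strictly between
    right
    refine ⟨hmem, ?_⟩
    rintro q hq ⟨hmin, hmax⟩
    have hqS : q ∈ S := ((hL1 q).1 hq).1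
    -- product of slope differences is negative
    have hA : (q.1 - l1.1) * (q.1 - lsec.1) < 0 := by
      rcases le_total lsec.1 l1.1 with h | h
      · rw [min_eq_left h] at hmin
        rw [max_eq_right h] at hmax
        nlinarith
      · rw [min_eq_right h] at hmin
        rw [max_eq_left h] at hmax
        nlinarith
    have hq1 : q ≠ l1 := by
      intro h; rw [h] at hA; nlinarith
    have hq2 : q ≠ lsec := by
      intro h; rw [h] at hA; nlinarith
    -- q is strictly below l1 and lsec at x0
    have hv1 : val q x0 < val l1 x0 :=
      lt_of_le_of_ne (hl1max q hqS) (fun h => hq1 (hdist q hqS l1 hl1 h))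
    have hv2 : val q x0 < val lsec x0 :=
      lt_of_le_of_ne (hlsecmax q hqS hq1) (fun h => hq2 (hdist q hqS lsec hlsec h))
    -- but q is above both somewhere
    obtain ⟨a, b, hab, hdom⟩ := ((hL1 q).1 hq).2
    set z := (a + b) / 2 with hzdef
    have hz : z ∈ Set.Ioo a b := ⟨by rw [hzdef]; linarith, by rw [hzdef]; linarith⟩
    have h1 := hdom z hz l1 hl1
    have h2 := hdom z hz lsec hlsec
    simp only [hval] at h1 h2 hv1 hv2
    have hB : (q.1 - l1.1) * (z - x0) > 0 := by nlinarith
    have hC : (q.1 - lsec.1) * (z - x0) > 0 := by nlinarith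
    nlinarith [mul_pos hB hC, sq_nonneg (z - x0)]
  · -- lsec ∉ L1 : then lsec ∈ L2 and hence lsec = l2
    left
    have hkey : ∀ q ∈ S \ L1, q ≠ lsec → val q x0 < val lsec x0 := by
      intro q hq hne
      have hqS : q ∈ S := (Finset.mem_sdiff.1 hq).1
      have hqne1 : q ≠ l1 := fun h => (Finset.mem_sdiff.1 hq).2 (h ▸ hl1L1)
      exact lt_of_le_of_ne (hlsecmax q hqS hqne1)
        (fun h => hne (hdist q hqS lsec hlsec h))
    have hlsecL2 : lsec ∈ L2 := by
      refine (hL2 lsec).2 ⟨Finset.mem_sdiff.2 ⟨hlsec, hmem⟩, ?_⟩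
      exact exists_interval_dom (S \ L1) x0 val hval lsec hkey
    have hl2mem := (hL2 l2).1 hl2
    have hl2S : l2 ∈ S := (Finset.mem_sdiff.1 hl2mem.1).1
    have hl2ne : l2 ≠ l1 := fun h => (Finset.mem_sdiff.1 hl2mem.1).2 (h ▸ hl1L1)
    exact hdist lsec hlsec l2 hl2S
      (le_antisymm (hl2max lsec hlsecL2) (hlsecmax l2 hl2S hl2ne))
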